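/- arXiv:0805.2797 — 5 statements merged into one kernel-verified Lean document; each statement's English description precedes it below -/
import Mathlib

section
/- For a TU game v, a subset S ⊆ N is an equivalence class in v (all players in S are pairwise equivalent under ∼^v) if and only if for all coalitions T, Z ⊆ N with T∖S = Z∖S and |T| = |Z|, one has v(T) = v(Z). -/
/-- Marginal contribution of player `i` to coalition `S` in game `v`. -/
def marg {N : Type*} [DecidableEq N] (v : Finset N → ℝ) (i : N) (S : Finset N) : ℝ :=
  v (insert i S) - v S

/-- `S` is an equivalence class in `v`: all players in `S` are pairwise
equivalent under `∼^v`. -/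
def IsEqClass {N : Type*} [DecidableEq N] (v : Finset N → ℝ) (S : Finset N) : Prop :=
  ∀ i ∈ S, ∀ j ∈ S, ∀ U : Finset N, i ∉ U → j ∉ U → marg v i U = marg v j U

/-- `S` is an equivalence class in `v` iff `v(T) = v(Z)` for all
coalitions `T, Z` with `T∖S = Z∖S` and `|T| = |Z|`. -/
theorem stmt_6 {N : Type*} [Fintype N] [DecidableEq N] [Nonempty N]
    (v : Finset N → ℝ) (hv : v ∅ = 0) (S : Finset N) :
    IsEqClass v S ↔
      ∀ T Z : Finset N, T \ S = Z \ S → T.card = Z.card → v T = v Z := by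
  constructor
  · intro H
    have swap : ∀ (i j : N) (T : Finset N), i ∈ S → j ∈ S → i ∈ T → j ∉ T →
        v T = v (insert j (T.erase i)) := by
      intro i j T hiS hjS hiT hjT
      have h := H i hiS j hjS (T.erase i) (Finset.notMem_erase i T)
        (fun hmem => hjT (Finset.mem_of_mem_erase hmem))
      unfold marg at h
      rw [Finset.insert_erase hiT] at h
      linarith
    have aux : ∀ n (T Z : Finset N), (T \ Z).card = n → T \ S = Z \ S →
        T.card = Z.card → v T = v Z := by
      intro n
      induction n with
      | zero =>
        intro T Z h0 _ hcard
        have hsub : T ⊆ Z := by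
          rw [← Finset.sdiff_eq_empty_iff_subset]
          exact Finset.card_eq_zero.mp h0
        rw [Finset.eq_of_subset_of_card_le hsub hcard.ge]
      | succ n ih =>
        intro T Z h hsd hcard
        obtain ⟨i, hi⟩ : (T \ Z).Nonempty := by
          rw [← Finset.card_pos, h]; omega
        obtain ⟨j, hj⟩ : (Z \ T).Nonempty := by
          rw [← Finset.card_pos, Finset.card_sdiff_comm hcard.symm, h]; omega
        rw [Finset.mem_sdiff] at hi hj
        obtain ⟨hiT, hiZ⟩ := hi
        obtain ⟨hjZ, hjT⟩ := hj
        have hiS : i ∈ S := by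
          by_contra hiS
          have : i ∈ Z \ S := by rw [← hsd]; exact Finset.mem_sdiff.mpr ⟨hiT, hiS⟩
          exact hiZ (Finset.mem_sdiff.mp this).1
        have hjS : j ∈ S := by
          by_contra hjS
          have : j ∈ T \ S := by rw [hsd]; exact Finset.mem_sdiff.mpr ⟨hjZ, hjS⟩
          exact hjT (Finset.mem_sdiff.mp this).1
        set T' := insert j (T.erase i) with hT'
        have hTpos : 0 < T.card := Finset.card_pos.mpr ⟨i, hiT⟩
        have hcard' : T'.card = T.card := by
          rw [hT', Finset.card_insert_of_notMem
            (fun hmem => hjT (Finset.mem_of_mem_erase hmem)),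
            Finset.card_erase_of_mem hiT]
          omega
        have hsdZ : T' \ Z = (T \ Z).erase i := by
          ext x
          simp only [hT', Finset.mem_sdiff, Finset.mem_insert, Finset.mem_erase]
          constructor
          · rintro ⟨hx1 | ⟨hx1, hx2⟩, hx3⟩
            · exact absurd (hx1 ▸ hjZ) hx3
            · exact ⟨hx1, hx2, hx3⟩
          · rintro ⟨hx1, hx2, hx3⟩
            exact ⟨Or.inr ⟨hx1, hx2⟩, hx3⟩
        have hsdS : T' \ S = Z \ S := by
          rw [← hsd]
          ext x
          simp only [hT', Finset.mem_sdiff, Finset.mem_insert, Finset.mem_erase]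
          constructor
          · rintro ⟨hx1 | ⟨hx1, hx2⟩, hx3⟩
            · exact absurd (hx1 ▸ hjS) hx3
            · exact ⟨hx2, hx3⟩
          · rintro ⟨hx1, hx2⟩
            exact ⟨Or.inr ⟨fun he => hx2 (he ▸ hiS), hx1⟩, hx2⟩
        rw [swap i j T hiS hjS hiT hjT]
        apply ih T' Z _ hsdS (hcard' ▸ hcard)
        rw [hsdZ, Finset.card_erase_of_mem (Finset.mem_sdiff.mpr ⟨hiT, hiZ⟩), h]
        omega
    intro T Z hsd hcard
    exact aux (T \ Z).card T Z rfl hsd hcard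
  · intro H i hi j hj U hiU hjU
    unfold marg
    have : v (insert i U) = v (insert j U) := by
      apply H
      · rw [Finset.insert_sdiff_of_mem _ hi, Finset.insert_sdiff_of_mem _ hj]
      · rw [Finset.card_insert_of_notMem hiU, Finset.card_insert_of_notMem hjU]
    rw [this]
end

section
/- Let v be a TU game, S an equivalence class in v, and k ∈ N∖S. Then for all coalitions T, Z ⊆ N with T∖S = Z∖S and |T| = |Z|, the marginal contributions of k agree: v'_k(T) = v'_k(Z). -/
lemma swap_marg {N : Type*} [DecidableEq N] (v : Finset N → ℝ) (S : Finset N)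
    (hS : IsEqClass v S) (k : N) (hk : k ∉ S) {i j : N} (hi : i ∈ S) (hj : j ∈ S)
    {T : Finset N} (hiT : i ∈ T) (hjT : j ∉ T) :
    marg v k T = marg v k (insert j (T.erase i)) := by
  have hik : i ≠ k := fun h => hk (h ▸ hi)
  have hjk : j ≠ k := fun h => hk (h ▸ hj)
  have hjU : j ∉ T.erase i := fun h => hjT (Finset.mem_of_mem_erase h)
  have h1 := hS i hi j hj (T.erase i) (Finset.notMem_erase i T) hjU
  have h2 := hS i hi j hj (insert k (T.erase i))
    (by simp [Finset.mem_insert, hik, Finset.notMem_erase])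
    (by simp [Finset.mem_insert, hjk, hjU])
  unfold marg at h1 h2 ⊢
  have e1 : insert i (T.erase i) = T := Finset.insert_erase hiT
  have e2 : insert i (insert k (T.erase i)) = insert k T := by
    rw [Finset.insert_comm, e1]
  have e3 : insert j (insert k (T.erase i)) = insert k (insert j (T.erase i)) := by
    rw [Finset.insert_comm]
  rw [e1] at h1
  rw [e2, e3] at h2
  have hT : v T = v (insert j (T.erase i)) := by linarith
  linarith

/-- if `S` is an equivalence class in `v` and `k ∉ S`, then
`v'_k(T) = v'_k(Z)` whenever `T∖S = Z∖S` and `|T| = |Z|`. -/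
theorem stmt_7 {N : Type*} [Fintype N] [DecidableEq N]
    (v : Finset N → ℝ) (hv : v ∅ = 0) (S : Finset N) (hS : IsEqClass v S)
    (k : N) (hk : k ∉ S) :
    ∀ T Z : Finset N, T \ S = Z \ S → T.card = Z.card →
      marg v k T = marg v k Z := by
  suffices H : ∀ n, ∀ T Z : Finset N, (T \ Z).card = n → T \ S = Z \ S →
      T.card = Z.card → marg v k T = marg v k Z by
    intro T Z h1 h2; exact H _ T Z rfl h1 h2
  intro n
  induction n using Nat.strong_induction_on with
  | _ n IH =>
    intro T Z hn hTS hcard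
    rcases Nat.eq_zero_or_pos n with h0 | hpos
    · subst h0
      have hsub : T ⊆ Z := by
        rw [← Finset.sdiff_eq_empty_iff_subset]
        exact Finset.card_eq_zero.mp hn
      rw [Finset.eq_of_subset_of_card_le hsub hcard.ge]
    · have hne : (T \ Z).Nonempty := by
        rw [← Finset.card_pos, hn]; exact hpos
      obtain ⟨i, hiTZ⟩ := hne
      rw [Finset.mem_sdiff] at hiTZ
      have hiS : i ∈ S := by
        by_contra hiS
        have : i ∈ T \ S := Finset.mem_sdiff.mpr ⟨hiTZ.1, hiS⟩
        rw [hTS, Finset.mem_sdiff] at this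
        exact hiTZ.2 this.1
      have hZT : (Z \ T).Nonempty := by
        rw [← Finset.card_pos]
        have c1 := Finset.card_sdiff_add_card_inter T Z
        have c2 := Finset.card_sdiff_add_card_inter Z T
        rw [Finset.inter_comm] at c2
        omega
      obtain ⟨j, hjZT⟩ := hZT
      rw [Finset.mem_sdiff] at hjZT
      have hjS : j ∈ S := by
        by_contra hjS
        have : j ∈ Z \ S := Finset.mem_sdiff.mpr ⟨hjZT.1, hjS⟩
        rw [← hTS, Finset.mem_sdiff] at this
        exact hjZT.2 this.1
      set T' := insert j (T.erase i) with hT'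
      have hjTe : j ∉ T.erase i := fun h => hjZT.2 (Finset.mem_of_mem_erase h)
      have hcard' : T'.card = Z.card := by
        rw [hT', Finset.card_insert_of_notMem hjTe, Finset.card_erase_of_mem hiTZ.1]
        have : 1 ≤ T.card := Finset.card_pos.mpr ⟨i, hiTZ.1⟩
        omega
      have hTS' : T' \ S = Z \ S := by
        rw [← hTS]
        ext x
        simp only [hT', Finset.mem_sdiff, Finset.mem_insert, Finset.mem_erase]
        constructor
        · rintro ⟨hx1 | ⟨_, hx1⟩, hx2⟩
          · exact absurd (hx1 ▸ hjS) hx2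
          · exact ⟨hx1, hx2⟩
        · rintro ⟨hx1, hx2⟩
          exact ⟨Or.inr ⟨fun h => hx2 (h ▸ hiS), hx1⟩, hx2⟩
      have hsub : T' \ Z ⊆ (T \ Z).erase i := by
        intro x hx
        rw [Finset.mem_sdiff] at hx
        rcases Finset.mem_insert.mp hx.1 with h | h
        · exact absurd (h ▸ hjZT.1) hx.2
        · rw [Finset.mem_erase] at h ⊢
          exact ⟨h.1, Finset.mem_sdiff.mpr ⟨h.2, hx.2⟩⟩
      have hlt : (T' \ Z).card < n := by
        calc (T' \ Z).card ≤ ((T \ Z).erase i).card := Finset.card_le_card hsub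
        _ < (T \ Z).card := Finset.card_erase_lt_of_mem (Finset.mem_sdiff.mpr hiTZ)
        _ = n := hn
      rw [swap_marg v S hS k hk hiS hjS hiTZ.1 hjZT.2]
      exact IH _ hlt T' Z rfl hTS' hcard'
end

section
/- The class of all TU games on N is EMP-closed: for every game v, every equivalence class S in v, and every k ∈ N∖S, there exists a game w such that S ∪ {k} is an equivalence class in w and w'_k = v'_k (i.e., w(T ∪ {k}) − w(T) = v(T ∪ {k}) − v(T) for all T ⊆ N∖{k}). -/
section Aux

variable {N : Type*} [DecidableEq N]

/-- Exchange lemma: the value of a coalition only depends on the number of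
members of an equivalence class present. -/
lemma exchange (v : Finset N → ℝ) (S : Finset N) (hS : IsEqClass v S) :
    ∀ n (B B' D : Finset N), (B \ B').card = n → B ⊆ S → B' ⊆ S → B.card = B'.card →
      Disjoint D S → v (D ∪ B) = v (D ∪ B') := by
  intro n
  induction n with
  | zero =>
    intro B B' D h hB hB' hcard hD
    have hsub : B ⊆ B' := by
      intro x hx
      by_contra hx'
      have : x ∈ B \ B' := Finset.mem_sdiff.mpr ⟨hx, hx'⟩
      simp [Finset.card_eq_zero.mp h] at this
    have : B = B' := Finset.eq_of_subset_of_card_le hsub (le_of_eq hcard.symm)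
    rw [this]
  | succ n ih =>
    intro B B' D h hB hB' hcard hD
    obtain ⟨i, hi⟩ : (B \ B').Nonempty := by
      rw [← Finset.card_pos, h]; omega
    obtain ⟨j, hj⟩ : (B' \ B).Nonempty := by
      rw [← Finset.card_pos, Finset.card_sdiff_comm hcard.symm, h]; omega
    have hiB : i ∈ B := (Finset.mem_sdiff.mp hi).1
    have hiB' : i ∉ B' := (Finset.mem_sdiff.mp hi).2
    have hjB' : j ∈ B' := (Finset.mem_sdiff.mp hj).1
    have hjB : j ∉ B := (Finset.mem_sdiff.mp hj).2
    set U : Finset N := D ∪ B.erase i with hU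
    have hiU : i ∉ U := by
      simp only [hU, Finset.mem_union, Finset.mem_erase]
      push_neg
      exact ⟨Finset.disjoint_right.mp hD (hB hiB), fun h _ => absurd rfl h⟩
    have hjU : j ∉ U := by
      simp only [hU, Finset.mem_union, Finset.mem_erase]
      push_neg
      exact ⟨Finset.disjoint_right.mp hD (hB' hjB'), fun _ h => hjB h⟩
    have hmarg := hS i (hB hiB) j (hB' hjB') U hiU hjU
    have hvij : v (insert i U) = v (insert j U) := by
      have := hmarg
      simp only [marg] at this
      linarith
    have h1 : D ∪ B = insert i U := by
      conv_lhs => rw [← Finset.insert_erase hiB]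
      rw [hU, Finset.union_insert]
    have h2 : insert j U = D ∪ insert j (B.erase i) := by
      rw [hU, Finset.union_insert]
    set B'' : Finset N := insert j (B.erase i) with hB''
    have hB''S : B'' ⊆ S := by
      intro x hx
      rcases Finset.mem_insert.mp hx with rfl | hx
      · exact hB' hjB'
      · exact hB (Finset.mem_of_mem_erase hx)
    have hjne : j ∉ B.erase i := fun h => hjB (Finset.mem_of_mem_erase h)
    have hcard'' : B''.card = B'.card := by
      rw [hB'', Finset.card_insert_of_notMem hjne, Finset.card_erase_of_mem hiB, ← hcard]
      have : 0 < B.card := Finset.card_pos.mpr ⟨i, hiB⟩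
      omega
    have hsd : (B'' \ B').card = n := by
      have : B'' \ B' = (B \ B').erase i := by
        ext x
        simp only [hB'', Finset.mem_sdiff, Finset.mem_insert, Finset.mem_erase]
        constructor
        · rintro ⟨rfl | ⟨hxi, hxB⟩, hxB'⟩
          · exact absurd hjB' hxB'
          · exact ⟨hxi, hxB, hxB'⟩
        · rintro ⟨hxi, hxB, hxB'⟩
          exact ⟨Or.inr ⟨hxi, hxB⟩, hxB'⟩
      rw [this, Finset.card_erase_of_mem hi, h]
      omega
    calc v (D ∪ B) = v (insert i U) := by rw [h1]
      _ = v (insert j U) := hvij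
      _ = v (D ∪ B'') := by rw [h2]
      _ = v (D ∪ B') := ih B'' B' D hsd hB''S hB' hcard'' hD

/-- The first `m` elements of `S`. -/
noncomputable def Bm (S : Finset N) (m : ℕ) : Finset N := (S.toList.take m).toFinset

lemma Bm_subset (S : Finset N) (m : ℕ) : Bm S m ⊆ S := by
  intro x hx
  rw [Bm, List.mem_toFinset] at hx
  exact (Finset.mem_toList).mp (List.mem_of_mem_take hx)

lemma Bm_card (S : Finset N) (m : ℕ) (hm : m ≤ S.card) : (Bm S m).card = m := by
  rw [Bm, List.toFinset_card_of_nodup (S.nodup_toList.sublist (List.take_sublist _ _)),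
    List.length_take, Finset.length_toList]
  omega

/-- The recursive value function. -/
noncomputable def gAux (v : Finset N → ℝ) (k : N) (S : Finset N) : ℕ → Finset N → ℝ
  | 0, C => v C
  | (m + 1), C => gAux v k S m C + (v (insert k (C ∪ Bm S m)) - v (C ∪ Bm S m))

lemma gAux_zero (v : Finset N → ℝ) (k : N) (S C : Finset N) : gAux v k S 0 C = v C := rfl

lemma gAux_succ (v : Finset N → ℝ) (k : N) (S : Finset N) (m : ℕ) (C : Finset N) :
    gAux v k S (m + 1) C = gAux v k S m C + (v (insert k (C ∪ Bm S m)) - v (C ∪ Bm S m)) := rfl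

end Aux

/-- the class of all TU games on `N` is EMP-closed. -/
theorem stmt_8 {N : Type*} [Fintype N] [DecidableEq N] [Nonempty N]
    (v : Finset N → ℝ) (hv : v ∅ = 0) (S : Finset N) (hS : IsEqClass v S)
    (k : N) (hk : k ∉ S) :
    ∃ w : Finset N → ℝ, w ∅ = 0 ∧ IsEqClass w (insert k S) ∧
      ∀ T : Finset N, k ∉ T → marg w k T = marg v k T := by
  set A : Finset N := insert k S with hA
  refine ⟨fun T => gAux v k S ((T ∩ A).card) (T \ A), ?_, ?_, ?_⟩
  · simpa [gAux_zero] using hv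
  · -- equivalence class
    intro i hi j hj U hiU hjU
    have key : ∀ x ∈ A, x ∉ U →
        (insert x U ∩ A).card = (U ∩ A).card + 1 ∧ insert x U \ A = U \ A := by
      intro x hxA hxU
      constructor
      · rw [Finset.insert_inter_of_mem hxA,
          Finset.card_insert_of_notMem (fun h => hxU (Finset.mem_of_mem_inter_left h))]
      · rw [Finset.insert_sdiff_of_mem _ hxA]
    obtain ⟨hci, hsi⟩ := key i hi hiU
    obtain ⟨hcj, hsj⟩ := key j hj hjU
    simp only [marg, hci, hsi, hcj, hsj]
  · -- marginal of k preserved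
    intro T hkT
    have hTA : T ∩ A = T ∩ S := by
      rw [hA, Finset.inter_insert_of_notMem hkT]
    set m : ℕ := (T ∩ A).card with hm
    set C : Finset N := T \ A with hC
    have hCS : Disjoint C S := by
      rw [hC, hA]
      exact Finset.disjoint_left.mpr fun x hx hxS =>
        (Finset.mem_sdiff.mp hx).2 (Finset.mem_insert_of_mem hxS)
    have hkC : k ∉ C := fun h => (Finset.mem_sdiff.mp h).1 |> hkT
    have hmS : m ≤ S.card := by
      rw [hm, hTA]
      exact Finset.card_le_card Finset.inter_subset_right
    have hBmcard : (Bm S m).card = m := Bm_card S m hmS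
    have hT : T = C ∪ (T ∩ S) := by
      rw [hC, ← hTA]
      exact (Finset.sdiff_union_inter T A).symm
    -- key facts about insert k T
    have h1 : (insert k T ∩ A).card = m + 1 := by
      rw [hA, hm]
      rw [Finset.insert_inter_of_mem (Finset.mem_insert_self k S)]
      rw [Finset.card_insert_of_notMem (fun h => hkT (Finset.mem_of_mem_inter_left h))]
    have h2 : insert k T \ A = C := by
      rw [hC, hA, Finset.insert_sdiff_of_mem _ (Finset.mem_insert_self k S)]
    have hTSsub : T ∩ S ⊆ S := Finset.inter_subset_right
    have hTScard : (T ∩ S).card = (Bm S m).card := by rw [hBmcard, hm, hTA]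
    have e1 : v (C ∪ (T ∩ S)) = v (C ∪ Bm S m) :=
      exchange v S hS _ (T ∩ S) (Bm S m) C rfl hTSsub (Bm_subset S m) hTScard hCS
    have hDk : Disjoint (insert k C) S := by
      rw [Finset.disjoint_left]
      intro x hx hxS
      rcases Finset.mem_insert.mp hx with rfl | hx
      · exact hk hxS
      · exact Finset.disjoint_left.mp hCS hx hxS
    have e2 : v (insert k C ∪ (T ∩ S)) = v (insert k C ∪ Bm S m) :=
      exchange v S hS _ (T ∩ S) (Bm S m) (insert k C) rfl hTSsub (Bm_subset S m) hTScard hDk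
    have hins : insert k T = insert k C ∪ (T ∩ S) := by
      conv_lhs => rw [hT]
      rw [Finset.insert_union]
    have hins2 : insert k C ∪ Bm S m = insert k (C ∪ Bm S m) := by
      rw [Finset.insert_union]
    have hvT : v T = v (C ∪ Bm S m) := by rw [hT]; exact e1
    have hvkT : v (insert k T) = v (insert k (C ∪ Bm S m)) := by
      rw [hins, e2, hins2]
    simp only [marg]
    rw [h1, h2, gAux_succ, hvT, hvkT]
    ring
end

section
/- The class of strictly convex TU games is EMP-closed: for every strictly convex game v, every equivalence class S ⊊ N in v, and every k ∈ N∖S, there exists a strictly convex game w such that S ∪ {k} is an equivalence class in w and w'_k = v'_k. -/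
/-- A strictly convex TU game. -/
def StrictlyConvexGame {N : Type*} [DecidableEq N] (v : Finset N → ℝ) : Prop :=
  ∀ S T : Finset N, ¬ S ⊆ T → ¬ T ⊆ S → v S + v T < v (S ∪ T) + v (S ∩ T)

section Aux
variable {N : Type*} [DecidableEq N]

lemma marg_lt_of_conv (v : Finset N → ℝ) (hconv : StrictlyConvexGame v)
    {x : N} {U V : Finset N} (hxV : x ∉ V) (hUV : U ⊆ V) (hne : U ≠ V) :
    marg v x U < marg v x V := by
  have h1 : ¬ (insert x U ⊆ V) := fun h => hxV (h (Finset.mem_insert_self x U))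
  have h2 : ¬ (V ⊆ insert x U) := by
    intro h
    apply hne
    refine Finset.Subset.antisymm hUV (fun a ha => ?_)
    rcases Finset.mem_insert.mp (h ha) with rfl | h'
    · exact absurd ha hxV
    · exact h'
  have h3 := hconv (insert x U) V h1 h2
  have hu : insert x U ∪ V = insert x V := by
    ext a
    simp only [Finset.mem_union, Finset.mem_insert]
    constructor
    · rintro ((rfl | h) | h)
      · exact Or.inl rfl
      · exact Or.inr (hUV h)
      · exact Or.inr h
    · rintro (rfl | h)
      · exact Or.inl (Or.inl rfl)
      · exact Or.inr h
  have hi : insert x U ∩ V = U := by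
    ext a
    simp only [Finset.mem_inter, Finset.mem_insert]
    constructor
    · rintro ⟨rfl | h, hv⟩
      · exact absurd hv hxV
      · exact h
    · intro h
      exact ⟨Or.inr h, hUV h⟩
  rw [hu, hi] at h3
  unfold marg
  linarith

lemma marg_le_of_conv (v : Finset N → ℝ) (hconv : StrictlyConvexGame v)
    {x : N} {U V : Finset N} (hxV : x ∉ V) (hUV : U ⊆ V) :
    marg v x U ≤ marg v x V := by
  rcases eq_or_ne U V with rfl | hne
  · exact le_rfl
  · exact (marg_lt_of_conv v hconv hxV hUV hne).le


lemma marg_mono_of_d2 (w : Finset N → ℝ)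
    (hd2 : ∀ x y (Z : Finset N), x ≠ y → x ∉ Z → y ∉ Z →
      marg w x Z < marg w x (insert y Z)) :
    ∀ (n : ℕ) (x : N) (U V : Finset N), (V \ U).card ≤ n → x ∉ V → U ⊆ V →
      U = V ∨ marg w x U < marg w x V := by
  intro n
  induction n with
  | zero =>
    intro x U V hc hx hUV
    left
    have h0 : V \ U = ∅ := Finset.card_eq_zero.mp (Nat.le_zero.mp hc)
    exact Finset.Subset.antisymm hUV (Finset.sdiff_eq_empty_iff_subset.mp h0)
  | succ n ih =>
    intro x U V hc hx hUV
    rcases eq_or_ne U V with rfl | hne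
    · exact Or.inl rfl
    right
    have hVU : (V \ U).Nonempty := by
      rw [Finset.sdiff_nonempty]
      intro h
      exact hne (Finset.Subset.antisymm hUV h)
    obtain ⟨y, hy⟩ := hVU
    have hyV : y ∈ V := (Finset.mem_sdiff.mp hy).1
    have hyU : y ∉ U := (Finset.mem_sdiff.mp hy).2
    have hUV' : U ⊆ V.erase y := Finset.subset_erase.mpr ⟨hUV, hyU⟩
    have hxV' : x ∉ V.erase y := fun h => hx (Finset.mem_of_mem_erase h)
    have hcard : (V.erase y \ U).card ≤ n := by
      have he : V.erase y \ U = (V \ U).erase y := by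
        ext a
        simp only [Finset.mem_sdiff, Finset.mem_erase]
        tauto
      rw [he, Finset.card_erase_of_mem hy]
      omega
    have hstep : marg w x (V.erase y) < marg w x V := by
      have hxy : x ≠ y := fun h => hx (h ▸ hyV)
      have := hd2 x y (V.erase y) hxy hxV' (Finset.notMem_erase y V)
      rwa [Finset.insert_erase hyV] at this
    rcases ih x U (V.erase y) hcard hxV' hUV' with heq | hlt
    · rw [heq]; exact hstep
    · exact hlt.trans hstep

lemma marg_le_of_d2 (w : Finset N → ℝ)
    (hd2 : ∀ x y (Z : Finset N), x ≠ y → x ∉ Z → y ∉ Z →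
      marg w x Z < marg w x (insert y Z))
    {x : N} {U V : Finset N} (hx : x ∉ V) (hUV : U ⊆ V) :
    marg w x U ≤ marg w x V := by
  rcases marg_mono_of_d2 w hd2 (V \ U).card x U V le_rfl hx hUV with heq | hlt
  · rw [heq]
  · exact hlt.le

lemma marg_lt_of_d2 (w : Finset N → ℝ)
    (hd2 : ∀ x y (Z : Finset N), x ≠ y → x ∉ Z → y ∉ Z →
      marg w x Z < marg w x (insert y Z))
    {x : N} {U V : Finset N} (hx : x ∉ V) (hUV : U ⊆ V) (hne : U ≠ V) :
    marg w x U < marg w x V :=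
  (marg_mono_of_d2 w hd2 (V \ U).card x U V le_rfl hx hUV).resolve_left hne

lemma weak_supermod_of_d2 (w : Finset N → ℝ)
    (hd2 : ∀ x y (Z : Finset N), x ≠ y → x ∉ Z → y ∉ Z →
      marg w x Z < marg w x (insert y Z)) :
    ∀ (n : ℕ) (A B : Finset N), (A \ B).card ≤ n →
      w A + w B ≤ w (A ∪ B) + w (A ∩ B) := by
  intro n
  induction n with
  | zero =>
    intro A B hc
    have h0 : A ⊆ B := Finset.sdiff_eq_empty_iff_subset.mp
      (Finset.card_eq_zero.mp (Nat.le_zero.mp hc))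
    rw [Finset.union_eq_right.mpr h0, Finset.inter_eq_left.mpr h0]
    linarith
  | succ n ih =>
    intro A B hc
    by_cases hAB : A ⊆ B
    · rw [Finset.union_eq_right.mpr hAB, Finset.inter_eq_left.mpr hAB]
      linarith
    obtain ⟨a, haA, haB⟩ := Finset.not_subset.mp hAB
    set A' := A.erase a with hA'
    have haA' : a ∉ A' := Finset.notMem_erase a A
    have e1 : insert a A' = A := Finset.insert_erase haA
    have e2 : insert a (A' ∪ B) = A ∪ B := by rw [← Finset.insert_union, e1]
    have e3 : A' ∩ B = A ∩ B := by
      ext b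
      simp only [hA', Finset.mem_inter, Finset.mem_erase]
      constructor
      · rintro ⟨⟨_, h⟩, hb⟩; exact ⟨h, hb⟩
      · rintro ⟨h, hb⟩; exact ⟨⟨fun hba => haB (hba ▸ hb), h⟩, hb⟩
    have e4 : (A' \ B).card ≤ n := by
      have : A' \ B = (A \ B).erase a := by
        ext b
        simp only [hA', Finset.mem_sdiff, Finset.mem_erase]
        tauto
      rw [this, Finset.card_erase_of_mem (Finset.mem_sdiff.mpr ⟨haA, haB⟩)]
      omega
    have e5 : a ∉ A' ∪ B := by
      simp only [Finset.mem_union]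
      rintro (h | h)
      · exact haA' h
      · exact haB h
    have hIH := ih A' B e4
    rw [e3] at hIH
    have hmono : marg w a A' ≤ marg w a (A' ∪ B) :=
      marg_le_of_d2 w hd2 e5 Finset.subset_union_left
    have m1 : marg w a A' = w A - w A' := by rw [marg, e1]
    have m2 : marg w a (A' ∪ B) = w (A ∪ B) - w (A' ∪ B) := by rw [marg, e2]
    linarith

lemma conv_of_d2 (w : Finset N → ℝ)
    (hd2 : ∀ x y (Z : Finset N), x ≠ y → x ∉ Z → y ∉ Z →
      marg w x Z < marg w x (insert y Z)) :
    StrictlyConvexGame w := by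
  intro A B hAB hBA
  obtain ⟨a, haA, haB⟩ := Finset.not_subset.mp hAB
  obtain ⟨b, hbB, hbA⟩ := Finset.not_subset.mp hBA
  set A' := A.erase a with hA'
  have haA' : a ∉ A' := Finset.notMem_erase a A
  have e1 : insert a A' = A := Finset.insert_erase haA
  have e2 : insert a (A' ∪ B) = A ∪ B := by rw [← Finset.insert_union, e1]
  have e3 : A' ∩ B = A ∩ B := by
    ext c
    simp only [hA', Finset.mem_inter, Finset.mem_erase]
    constructor
    · rintro ⟨⟨_, h⟩, hb⟩; exact ⟨h, hb⟩
    · rintro ⟨h, hb⟩; exact ⟨⟨fun hba => haB (hba ▸ hb), h⟩, hb⟩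
  have e5 : a ∉ A' ∪ B := by
    simp only [Finset.mem_union]
    rintro (h | h)
    · exact haA' h
    · exact haB h
  have hIH := weak_supermod_of_d2 w hd2 (A' \ B).card A' B le_rfl
  rw [e3] at hIH
  have hne : A' ≠ A' ∪ B := by
    intro h
    have : b ∈ A' := by
      rw [h]
      exact Finset.mem_union_right _ hbB
    exact hbA (Finset.mem_of_mem_erase this)
  have hmono : marg w a A' < marg w a (A' ∪ B) :=
    marg_lt_of_d2 w hd2 e5 Finset.subset_union_left hne
  have m1 : marg w a A' = w A - w A' := by rw [marg, e1]
  have m2 : marg w a (A' ∪ B) = w (A ∪ B) - w (A' ∪ B) := by rw [marg, e2]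
  linarith


lemma eq_of_parts (S A B : Finset N) (h0 : (A ∩ S) \ B = ∅) (hsd : A \ S = B \ S)
    (hcard : (A ∩ S).card = (B ∩ S).card) : A = B := by
  have hsub : A ∩ S ⊆ B ∩ S := by
    intro a ha
    have haB : a ∈ B := by
      by_contra haB
      have : a ∈ (A ∩ S) \ B := Finset.mem_sdiff.mpr ⟨ha, haB⟩
      simp [h0] at this
    exact Finset.mem_inter.mpr ⟨haB, (Finset.mem_inter.mp ha).2⟩
  have hAS : A ∩ S = B ∩ S := Finset.eq_of_subset_of_card_le hsub (le_of_eq hcard.symm)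
  ext a
  by_cases haS : a ∈ S
  · constructor
    · intro h
      exact (Finset.mem_inter.mp (hAS ▸ Finset.mem_inter.mpr ⟨h, haS⟩)).1
    · intro h
      exact (Finset.mem_inter.mp (hAS ▸ Finset.mem_inter.mpr ⟨h, haS⟩)).1
  · constructor
    · intro h
      exact (Finset.mem_sdiff.mp (hsd ▸ Finset.mem_sdiff.mpr ⟨h, haS⟩)).1
    · intro h
      exact (Finset.mem_sdiff.mp (hsd ▸ Finset.mem_sdiff.mpr ⟨h, haS⟩)).1

lemma eqclass_symm (v : Finset N → ℝ) (S : Finset N) (hS : IsEqClass v S) :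
    ∀ (n : ℕ) (A B : Finset N), ((A ∩ S) \ B).card ≤ n → A \ S = B \ S →
      (A ∩ S).card = (B ∩ S).card → v A = v B := by
  intro n
  induction n with
  | zero =>
    intro A B hc hsd hcard
    rw [eq_of_parts S A B (Finset.card_eq_zero.mp (Nat.le_zero.mp hc)) hsd hcard]
  | succ n ih =>
    intro A B hc hsd hcard
    by_cases h0 : (A ∩ S) \ B = ∅
    · rw [eq_of_parts S A B h0 hsd hcard]
    obtain ⟨i, hi⟩ := Finset.nonempty_iff_ne_empty.mpr h0
    have hiA : i ∈ A := (Finset.mem_inter.mp (Finset.mem_sdiff.mp hi).1).1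
    have hiS : i ∈ S := (Finset.mem_inter.mp (Finset.mem_sdiff.mp hi).1).2
    have hiB : i ∉ B := (Finset.mem_sdiff.mp hi).2
    have hj : ∃ j, j ∈ (B ∩ S) \ A := by
      by_contra hjn
      push_neg at hjn
      have hsub : B ∩ S ⊆ A ∩ S := by
        intro a ha
        by_cases haA : a ∈ A
        · exact Finset.mem_inter.mpr ⟨haA, (Finset.mem_inter.mp ha).2⟩
        · exact absurd (Finset.mem_sdiff.mpr ⟨ha, haA⟩) (hjn a)
      have : B ∩ S = A ∩ S := Finset.eq_of_subset_of_card_le hsub (le_of_eq hcard)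
      exact hiB (Finset.mem_inter.mp (this ▸ Finset.mem_inter.mpr ⟨hiA, hiS⟩)).1
    obtain ⟨j, hjm⟩ := hj
    have hjB : j ∈ B := (Finset.mem_inter.mp (Finset.mem_sdiff.mp hjm).1).1
    have hjS : j ∈ S := (Finset.mem_inter.mp (Finset.mem_sdiff.mp hjm).1).2
    have hjA : j ∉ A := (Finset.mem_sdiff.mp hjm).2
    have hij : i ≠ j := fun h => hjA (h ▸ hiA)
    set U := A.erase i with hU
    have hiU : i ∉ U := Finset.notMem_erase i A
    have hjU : j ∉ U := fun h => hjA (Finset.mem_of_mem_erase h)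
    have hm := hS i hiS j hjS U hiU hjU
    have hins : insert i U = A := Finset.insert_erase hiA
    have hvA : v A = v (insert j U) := by
      unfold marg at hm
      rw [hins] at hm
      linarith
    set A2 := insert j U with hA2
    have hA2sd : A2 \ S = A \ S := by
      ext a
      simp only [hA2, hU, Finset.mem_sdiff, Finset.mem_insert, Finset.mem_erase]
      constructor
      · rintro ⟨rfl | ⟨_, h⟩, hs⟩
        · exact absurd hjS hs
        · exact ⟨h, hs⟩
      · rintro ⟨h, hs⟩
        exact ⟨Or.inr ⟨fun hai => hs (hai ▸ hiS), h⟩, hs⟩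
    have hA2i : A2 ∩ S = insert j ((A ∩ S).erase i) := by
      ext a
      simp only [hA2, hU, Finset.mem_inter, Finset.mem_insert, Finset.mem_erase]
      constructor
      · rintro ⟨rfl | ⟨hne, h⟩, hs⟩
        · exact Or.inl rfl
        · exact Or.inr ⟨hne, h, hs⟩
      · rintro (rfl | ⟨hne, h, hs⟩)
        · exact ⟨Or.inl rfl, hjS⟩
        · exact ⟨Or.inr ⟨hne, h⟩, hs⟩
    have hiAS : i ∈ A ∩ S := Finset.mem_inter.mpr ⟨hiA, hiS⟩
    have hjASe : j ∉ (A ∩ S).erase i := fun h =>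
      hjA (Finset.mem_inter.mp (Finset.mem_of_mem_erase h)).1
    have hA2card : (A2 ∩ S).card = (A ∩ S).card := by
      rw [hA2i, Finset.card_insert_of_notMem hjASe, Finset.card_erase_of_mem hiAS]
      have : 1 ≤ (A ∩ S).card := Finset.card_pos.mpr ⟨i, hiAS⟩
      omega
    have hA2dec : (A2 ∩ S) \ B = ((A ∩ S) \ B).erase i := by
      ext a
      simp only [hA2i, Finset.mem_sdiff, Finset.mem_insert, Finset.mem_erase,
        Finset.mem_inter]
      constructor
      · rintro ⟨rfl | ⟨hne, h⟩, hb⟩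
        · exact absurd hjB hb
        · exact ⟨hne, h, hb⟩
      · rintro ⟨hne, h, hb⟩
        exact ⟨Or.inr ⟨hne, h⟩, hb⟩
    have hc2 : ((A2 ∩ S) \ B).card ≤ n := by
      rw [hA2dec, Finset.card_erase_of_mem (Finset.mem_sdiff.mpr ⟨hiAS, hiB⟩)]
      omega
    rw [hvA]
    exact ih A2 B hc2 (hA2sd.trans hsd) (hA2card.trans hcard)

end Aux

/-- the class of strictly convex games is EMP-closed. -/
theorem stmt_16 {N : Type*} [Fintype N] [DecidableEq N]
    (v : Finset N → ℝ) (hv : v ∅ = 0) (hconv : StrictlyConvexGame v)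
    (S : Finset N) (hSsub : S ⊂ Finset.univ) (hS : IsEqClass v S)
    (k : N) (hk : k ∉ S) :
    ∃ w : Finset N → ℝ, w ∅ = 0 ∧ StrictlyConvexGame w ∧
      IsEqClass w (insert k S) ∧
      ∀ T : Finset N, k ∉ T → marg w k T = marg v k T := by
  classical
  set K : Finset N := insert k S with hK
  set L : List N := S.toList with hLdef
  set E : ℕ → Finset N := fun t => (L.take t).toFinset with hEdef
  set hfun : Finset N → ℝ := fun A => marg v k A with hfdef
  set P : ℝ := ∑ A : Finset N, |v A| with hPdef
  set n0 : ℕ := Fintype.card N with hn0def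
  set M : ℝ := 4 * (n0 : ℝ) * P + 1 with hMdef
  set w : Finset N → ℝ := fun T =>
    v (T \ K) + M * ((T \ K).card : ℝ) ^ 2 +
      ∑ t ∈ Finset.range ((T ∩ K).card), hfun ((T \ K) ∪ E t) with hwdef
  -- basic facts
  have hkK : k ∈ K := Finset.mem_insert_self k S
  have hSK : S ⊆ K := Finset.subset_insert k S
  have hKcard : K.card = S.card + 1 := Finset.card_insert_of_notMem hk
  have hEsub : ∀ t, E t ⊆ S := by
    intro t a ha
    rw [hEdef] at ha
    have := List.mem_toFinset.mp ha
    have := List.take_subset t L this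
    rwa [hLdef, Finset.mem_toList] at this
  have hEmono : ∀ {t t' : ℕ}, t ≤ t' → E t ⊆ E t' := by
    intro t t' htt a ha
    rw [hEdef] at ha ⊢
    rw [List.mem_toFinset] at ha ⊢
    have : L.take t = (L.take t').take t := by
      rw [List.take_take, min_eq_left htt]
    rw [this] at ha
    exact List.take_subset t (L.take t') ha
  have hEcard : ∀ t, t ≤ S.card → (E t).card = t := by
    intro t ht
    rw [hEdef]
    rw [List.toFinset_card_of_nodup ((S.nodup_toList).sublist (List.take_sublist t L))]
    rw [List.length_take, hLdef, Finset.length_toList]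
    omega
  have hkE : ∀ t, k ∉ E t := fun t h => hk (hEsub t h)
  have hknotC : ∀ T : Finset N, k ∉ T \ K := fun T h => (Finset.mem_sdiff.mp h).2 hkK
  have hSnotC : ∀ (T : Finset N) (a : N), a ∈ S → a ∉ T \ K :=
    fun T a haS h => (Finset.mem_sdiff.mp h).2 (hSK haS)
  have idA : ∀ i ∈ K, ∀ U : Finset N, insert i U \ K = U \ K := by
    intro i hi U
    ext a
    simp only [Finset.mem_sdiff, Finset.mem_insert]
    constructor
    · rintro ⟨rfl | h, hK'⟩
      · exact absurd hi hK'
      · exact ⟨h, hK'⟩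
    · rintro ⟨h, hK'⟩
      exact ⟨Or.inr h, hK'⟩
  have idB : ∀ i ∈ K, ∀ U : Finset N, i ∉ U → (insert i U ∩ K).card = (U ∩ K).card + 1 := by
    intro i hi U hiU
    have : insert i U ∩ K = insert i (U ∩ K) := by
      ext a
      simp only [Finset.mem_inter, Finset.mem_insert]
      constructor
      · rintro ⟨rfl | h, hK'⟩
        · exact Or.inl rfl
        · exact Or.inr ⟨h, hK'⟩
      · rintro (rfl | ⟨h, hK'⟩)
        · exact ⟨Or.inl rfl, hi⟩
        · exact ⟨Or.inr h, hK'⟩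
    rw [this, Finset.card_insert_of_notMem (fun h => hiU (Finset.mem_inter.mp h).1)]
  have idC : ∀ x, x ∉ K → ∀ U : Finset N, insert x U \ K = insert x (U \ K) := by
    intro x hx U
    ext a
    simp only [Finset.mem_sdiff, Finset.mem_insert]
    constructor
    · rintro ⟨rfl | h, hK'⟩
      · exact Or.inl rfl
      · exact Or.inr ⟨h, hK'⟩
    · rintro (rfl | ⟨h, hK'⟩)
      · exact ⟨Or.inl rfl, hx⟩
      · exact ⟨Or.inr h, hK'⟩
  have idD : ∀ x, x ∉ K → ∀ U : Finset N, insert x U ∩ K = U ∩ K := by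
    intro x hx U
    ext a
    simp only [Finset.mem_inter, Finset.mem_insert]
    constructor
    · rintro ⟨rfl | h, hK'⟩
      · exact absurd hK' hx
      · exact ⟨h, hK'⟩
    · rintro ⟨h, hK'⟩
      exact ⟨Or.inr h, hK'⟩
  -- the key marginal formula for members of K
  have Lkey : ∀ i ∈ K, ∀ U : Finset N, i ∉ U →
      marg w i U = hfun ((U \ K) ∪ E ((U ∩ K).card)) := by
    intro i hi U hiU
    simp only [marg, hwdef]
    rw [idA i hi U, idB i hi U hiU, Finset.sum_range_succ]
    ring
  refine ⟨w, ?_, ?_, ?_, ?_⟩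
  · -- w ∅ = 0
    simp [hwdef, hv]
  · -- strict convexity
    apply conv_of_d2 w
    intro x y Z hxy hxZ hyZ
    have hPb : ∀ A : Finset N, |v A| ≤ P := by
      intro A
      rw [hPdef]
      exact Finset.single_le_sum (f := fun A => |v A|) (fun _ _ => abs_nonneg _)
        (Finset.mem_univ A)
    have hP0 : 0 ≤ P := (abs_nonneg _).trans (hPb ∅)
    by_cases hxK : x ∈ K
    · have hxyZ : x ∉ insert y Z := by
        simp only [Finset.mem_insert]
        rintro (rfl | h)
        · exact hxy rfl
        · exact hxZ h
      rw [Lkey x hxK Z hxZ, Lkey x hxK (insert y Z) hxyZ]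
      by_cases hyK : y ∈ K
      · rw [idA y hyK Z, idB y hyK Z hyZ]
        have hsub2 : Z ∩ K ⊆ (K.erase x).erase y := by
          intro a ha
          have haZ : a ∈ Z := (Finset.mem_inter.mp ha).1
          have haK : a ∈ K := (Finset.mem_inter.mp ha).2
          exact Finset.mem_erase.mpr ⟨fun h => hyZ (h ▸ haZ),
            Finset.mem_erase.mpr ⟨fun h => hxZ (h ▸ haZ), haK⟩⟩
        have hyKx : y ∈ K.erase x := Finset.mem_erase.mpr ⟨fun h => hxy h.symm, hyK⟩
        have hr2 : (Z ∩ K).card + 1 ≤ S.card := by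
          have h1 := Finset.card_le_card hsub2
          have h2 := Finset.card_erase_add_one hyKx
          have h3 := Finset.card_erase_add_one hxK
          linarith
        have hEss : E ((Z ∩ K).card) ⊂ E ((Z ∩ K).card + 1) := by
          refine Finset.ssubset_iff_subset_ne.mpr ⟨hEmono (Nat.le_succ _), ?_⟩
          intro h
          have h1 : (E ((Z ∩ K).card)).card = (Z ∩ K).card := hEcard _ (Nat.le_of_succ_le hr2)
          have h2 : (E ((Z ∩ K).card + 1)).card = (Z ∩ K).card + 1 := hEcard _ hr2
          rw [h, h2] at h1
          exact Nat.succ_ne_self _ h1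
        obtain ⟨e, heE, heEr⟩ := Finset.exists_of_ssubset hEss
        have heS : e ∈ S := hEsub _ heE
        simp only [hfdef]
        apply marg_lt_of_conv v hconv
        · intro h
          rcases Finset.mem_union.mp h with h | h
          · exact hknotC Z h
          · exact hkE _ h
        · exact Finset.union_subset_union_right (hEmono (Nat.le_succ _))
        · intro h
          have he2 : e ∈ Z \ K ∪ E ((Z ∩ K).card + 1) := Finset.mem_union_right _ heE
          rw [← h] at he2
          rcases Finset.mem_union.mp he2 with h' | h'
          · exact hSnotC Z e heS h'
          · exact heEr h'
      · rw [idC y hyK Z, idD y hyK Z]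
        rw [Finset.insert_union]
        have hyC : y ∉ Z \ K ∪ E ((Z ∩ K).card) := by
          intro h
          rcases Finset.mem_union.mp h with h | h
          · exact hyZ (Finset.mem_sdiff.mp h).1
          · exact hyK (hSK (hEsub _ h))
        simp only [hfdef]
        apply marg_lt_of_conv v hconv
        · intro h
          rcases Finset.mem_insert.mp h with rfl | h
          · exact hyK hkK
          · rcases Finset.mem_union.mp h with h' | h'
            · exact hknotC Z h'
            · exact hkE _ h'
        · exact Finset.subset_insert y _
        · intro h
          rw [h] at hyC
          exact hyC (Finset.mem_insert_self y _)
    · have hxC : x ∉ Z \ K := fun h => hxZ (Finset.mem_sdiff.mp h).1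
      simp only [marg, hwdef]
      by_cases hyK : y ∈ K
      · rw [idC x hxK (insert y Z), idC x hxK Z, idA y hyK Z,
            idD x hxK (insert y Z), idD x hxK Z, idB y hyK Z hyZ,
            Finset.sum_range_succ, Finset.sum_range_succ]
        simp only [Finset.insert_union]
        have hxCE : x ∉ Z \ K ∪ E ((Z ∩ K).card) := by
          intro h
          rcases Finset.mem_union.mp h with h | h
          · exact hxC h
          · exact hxK (hSK (hEsub _ h))
        have hkxCE : k ∉ insert x (Z \ K ∪ E ((Z ∩ K).card)) := by
          intro h
          rcases Finset.mem_insert.mp h with rfl | h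
          · exact hxK hkK
          · rcases Finset.mem_union.mp h with h' | h'
            · exact hknotC Z h'
            · exact hkE _ h'
        have hstep : hfun (Z \ K ∪ E ((Z ∩ K).card)) <
            hfun (insert x (Z \ K ∪ E ((Z ∩ K).card))) := by
          simp only [hfdef]
          exact marg_lt_of_conv v hconv hkxCE (Finset.subset_insert x _)
            (fun h => by rw [h] at hxCE; exact hxCE (Finset.mem_insert_self x _))
        linarith [hstep]
      · have hyC : y ∉ Z \ K := fun h => hyZ (Finset.mem_sdiff.mp h).1
        have hxyC : x ∉ insert y (Z \ K) := by
          simp only [Finset.mem_insert]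
          rintro (rfl | h)
          · exact hxy rfl
          · exact hxC h
        rw [idC x hxK (insert y Z), idC y hyK Z, idC x hxK Z,
            idD x hxK (insert y Z), idD y hyK Z, idD x hxK Z,
            Finset.card_insert_of_notMem hxyC, Finset.card_insert_of_notMem hyC,
            Finset.card_insert_of_notMem hxC]
        have hfb : ∀ A : Finset N, |hfun A| ≤ 2 * P := by
          intro A
          simp only [hfdef, marg]
          calc |v (insert k A) - v A| ≤ |v (insert k A)| + |v A| := abs_sub _ _
          _ ≤ P + P := add_le_add (hPb _) (hPb _)
          _ = 2 * P := by ring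
        have hrn0 : (Z ∩ K).card ≤ n0 := by
          rw [hn0def, ← Finset.card_univ]
          exact Finset.card_le_univ _
        have hgb : ∀ D : Finset N,
            |∑ t ∈ Finset.range ((Z ∩ K).card), hfun (D ∪ E t)| ≤ 2 * (n0 : ℝ) * P := by
          intro D
          calc |∑ t ∈ Finset.range ((Z ∩ K).card), hfun (D ∪ E t)|
              ≤ ∑ t ∈ Finset.range ((Z ∩ K).card), |hfun (D ∪ E t)| :=
            Finset.abs_sum_le_sum_abs _ _
          _ ≤ ∑ _t ∈ Finset.range ((Z ∩ K).card), 2 * P :=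
            Finset.sum_le_sum (fun t _ => hfb _)
          _ = ((Z ∩ K).card : ℝ) * (2 * P) := by
            rw [Finset.sum_const, Finset.card_range, nsmul_eq_mul]
          _ ≤ (n0 : ℝ) * (2 * P) := by
            apply mul_le_mul_of_nonneg_right _ (by linarith)
            exact_mod_cast hrn0
          _ = 2 * (n0 : ℝ) * P := by ring
        have hv2 : marg v x (Z \ K) < marg v x (insert y (Z \ K)) :=
          marg_lt_of_conv v hconv hxyC (Finset.subset_insert y _)
            (fun h => by rw [h] at hyC; exact hyC (Finset.mem_insert_self y _))
        simp only [marg] at hv2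
        have b1 := abs_le.mp (hgb (insert x (insert y (Z \ K))))
        have b2 := abs_le.mp (hgb (insert y (Z \ K)))
        have b3 := abs_le.mp (hgb (insert x (Z \ K)))
        have b4 := abs_le.mp (hgb (Z \ K))
        have hM2 : M * (((Z \ K).card : ℝ) + 1 + 1) ^ 2 - M * (((Z \ K).card : ℝ) + 1) ^ 2
            - (M * (((Z \ K).card : ℝ) + 1) ^ 2 - M * (((Z \ K).card : ℝ)) ^ 2) = 2 * M := by
          ring
        have hMval : 2 * M = 8 * (n0 : ℝ) * P + 2 := by rw [hMdef]; ring
        have hn0P : 0 ≤ (n0 : ℝ) * P := mul_nonneg (by positivity) hP0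
        push_cast
        linarith [hv2, b1.1, b1.2, b2.1, b2.2, b3.1, b3.2, b4.1, b4.2]
  · -- IsEqClass
    intro i hi j hj U hiU hjU
    rw [Lkey i hi U hiU, Lkey j hj U hjU]
  · -- marginal of k preserved
    intro T hkT
    rw [Lkey k hkK T hkT]
    have hTK1 : T \ K = T \ S := by
      ext a
      simp only [Finset.mem_sdiff, hK, Finset.mem_insert]
      constructor
      · rintro ⟨ha, h⟩
        exact ⟨ha, fun hs => h (Or.inr hs)⟩
      · rintro ⟨ha, h⟩
        refine ⟨ha, ?_⟩
        rintro (rfl | hs)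
        · exact hkT ha
        · exact h hs
    have hTK2 : T ∩ K = T ∩ S := by
      ext a
      simp only [Finset.mem_inter, hK, Finset.mem_insert]
      constructor
      · rintro ⟨ha, rfl | hs⟩
        · exact absurd ha hkT
        · exact ⟨ha, hs⟩
      · rintro ⟨ha, hs⟩
        exact ⟨ha, Or.inr hs⟩
    rw [hTK1, hTK2]
    set m := (T ∩ S).card with hm
    have hmle : m ≤ S.card := Finset.card_le_card Finset.inter_subset_right
    have hEm : (E m).card = m := hEcard m hmle
    have hAint : ((T \ S) ∪ E m) ∩ S = E m := by
      ext a
      simp only [Finset.mem_inter, Finset.mem_union, Finset.mem_sdiff]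
      constructor
      · rintro ⟨⟨ha, h⟩ | h, hs⟩
        · exact absurd hs h
        · exact h
      · intro h
        exact ⟨Or.inr h, hEsub m h⟩
    have hAsd : ((T \ S) ∪ E m) \ S = T \ S := by
      ext a
      simp only [Finset.mem_sdiff, Finset.mem_union]
      constructor
      · rintro ⟨⟨ha, h⟩ | h, hs⟩
        · exact ⟨ha, h⟩
        · exact absurd (hEsub m h) hs
      · rintro ⟨ha, h⟩
        exact ⟨Or.inl ⟨ha, h⟩, h⟩
    have eq1 : v ((T \ S) ∪ E m) = v T := by
      apply eqclass_symm v S hS ((((T \ S) ∪ E m) ∩ S) \ T).card _ _ le_rfl hAsd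
      rw [hAint, hEm]
    have hkA : k ∉ (T \ S) ∪ E m := by
      intro h
      rcases Finset.mem_union.mp h with h | h
      · exact hkT (Finset.mem_sdiff.mp h).1
      · exact hkE m h
    have eq2 : v (insert k ((T \ S) ∪ E m)) = v (insert k T) := by
      apply eqclass_symm v S hS (((insert k ((T \ S) ∪ E m)) ∩ S) \ (insert k T)).card _ _ le_rfl
      · -- sdiff equal
        ext a
        simp only [Finset.mem_sdiff, Finset.mem_insert, Finset.mem_union]
        constructor
        · rintro ⟨rfl | (⟨ha, h⟩ | h), hs⟩
          · exact ⟨Or.inl rfl, hs⟩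
          · exact ⟨Or.inr ha, hs⟩
          · exact absurd (hEsub m h) hs
        · rintro ⟨rfl | ha, hs⟩
          · exact ⟨Or.inl rfl, hs⟩
          · exact ⟨Or.inr (Or.inl ⟨ha, hs⟩), hs⟩
      · -- inter cards equal
        have i1 : insert k ((T \ S) ∪ E m) ∩ S = E m := by
          ext a
          simp only [Finset.mem_inter, Finset.mem_insert, Finset.mem_union, Finset.mem_sdiff]
          constructor
          · rintro ⟨rfl | (⟨ha, h⟩ | h), hs⟩
            · exact absurd hs hk
            · exact absurd hs h
            · exact h
          · intro h
            exact ⟨Or.inr (Or.inr h), hEsub m h⟩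
        have i2 : insert k T ∩ S = T ∩ S := by
          ext a
          simp only [Finset.mem_inter, Finset.mem_insert]
          constructor
          · rintro ⟨rfl | ha, hs⟩
            · exact absurd hs hk
            · exact ⟨ha, hs⟩
          · rintro ⟨ha, hs⟩
            exact ⟨Or.inr ha, hs⟩
        rw [i1, i2, hEm]
    simp only [hfdef, marg]
    rw [eq1, eq2]
end

section
/- The class of essential games is not EMP-closed for |N| ≥ 3. Specifically, for N = {1,2,3} and v given by v({1})=v({2})=0, v({3})=10, v({1,2})=50, v({1,3})=v({2,3})=0, v(N)=20 (in which {1,2} is an equivalence class), the unique game w in which N is an equivalence class and w'_3 = v'_3 is not essential. -/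
/-- An essential TU game: `v(N) > Σ_{i∈N} v({i})`. -/
def EssentialGame {N : Type*} [Fintype N] [DecidableEq N] (v : Finset N → ℝ) : Prop :=
  v Finset.univ > ∑ i : N, v {i}

/-- The game of Example 2(1): players `0,1,2` stand for `1,2,3`;
`v({1})=v({2})=0`, `v({3})=10`, `v({1,2})=50`, `v({1,3})=v({2,3})=0`, `v(N)=20`. -/
noncomputable def exGame : Finset (Fin 3) → ℝ := fun S =>
  if S = {0, 1} then 50
  else if S = {2} then 10
  else if S = Finset.univ then 20
  else 0

lemma exval (S : Finset (Fin 3)) : exGame S =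
    if S = {0, 1} then 50 else if S = {2} then 10
    else if S = Finset.univ then 20 else 0 := rfl

lemma exOther (S : Finset (Fin 3)) (h1 : S ≠ {0,1}) (h2 : S ≠ {2})
    (h3 : S ≠ Finset.univ) : exGame S = 0 := by
  rw [exval, if_neg h1, if_neg h2, if_neg h3]

lemma ex01 : exGame {0,1} = 50 := by rw [exval, if_pos rfl]
lemma ex2 : exGame {2} = 10 := by rw [exval, if_neg (by decide), if_pos rfl]
lemma exU : exGame Finset.univ = 20 := by
  rw [exval, if_neg (by decide), if_neg (by decide), if_pos rfl]

/-- the class of essential games is not EMP-closed: `exGame` is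
essential with equivalence class `{1,2}` (here `{0,1}`), yet any game `w` in
which `N` is an equivalence class and `w'_3 = exGame'_3` fails to be essential. -/
theorem stmt_17 :
    EssentialGame exGame ∧ IsEqClass exGame {0, 1} ∧
      ∀ w : Finset (Fin 3) → ℝ, w ∅ = 0 →
        IsEqClass w Finset.univ →
        (∀ T : Finset (Fin 3), (2 : Fin 3) ∉ T → marg w 2 T = marg exGame 2 T) →
        ¬ EssentialGame w := by
  refine ⟨?_, ?_, ?_⟩
  · show exGame Finset.univ > _
    rw [Fin.sum_univ_three, exU, ex2,
      exOther {0} (by decide) (by decide) (by decide),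
      exOther {1} (by decide) (by decide) (by decide)]
    norm_num
  · intro i hi j hj U hiU hjU
    have key : ∀ U : Finset (Fin 3), (0:Fin 3) ∉ U → (1:Fin 3) ∉ U →
        marg exGame 0 U = marg exGame 1 U := by
      intro U h0 h1
      have hsub : U ⊆ {2} := by
        intro x hx; fin_cases x
        · exact absurd hx h0
        · exact absurd hx h1
        · simp
      rcases Finset.subset_singleton_iff.mp hsub with rfl | rfl
      · unfold marg
        rw [exOther (insert 0 ∅) (by decide) (by decide) (by decide),
          exOther (insert 1 ∅) (by decide) (by decide) (by decide)]
      · unfold marg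
        rw [exOther (insert 0 {2}) (by decide) (by decide) (by decide),
          exOther (insert 1 {2}) (by decide) (by decide) (by decide)]
    fin_cases hi <;> fin_cases hj
    · rfl
    · exact key U hiU hjU
    · exact (key U hjU hiU).symm
    · rfl
  · intro w h0 heq hm hE
    have m0 : w {2} - w ∅ = 10 := by
      have := hm ∅ (by decide)
      unfold marg at this
      rwa [show exGame (insert 2 ∅) = 10 from ex2, show exGame ∅ = 0 from
        exOther ∅ (by decide) (by decide) (by decide), sub_zero] at this
    have m1 : w (insert 2 {0}) - w {0} = 0 := by
      have := hm {0} (by decide)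
      unfold marg at this
      rwa [exOther (insert 2 {0}) (by decide) (by decide) (by decide),
        exOther {0} (by decide) (by decide) (by decide), sub_zero] at this
    have m1' : w (insert 2 {1}) - w {1} = 0 := by
      have := hm {1} (by decide)
      unfold marg at this
      rwa [exOther (insert 2 {1}) (by decide) (by decide) (by decide),
        exOther {1} (by decide) (by decide) (by decide), sub_zero] at this
    have m2 : w Finset.univ - w {0,1} = -30 := by
      have := hm {0,1} (by decide)
      unfold marg at this
      rw [show insert (2:Fin 3) ({0,1} : Finset (Fin 3)) = Finset.univ from by decide,
        exU, ex01] at this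
      linarith
    have q0 : w {0} - w ∅ = w {2} - w ∅ := by
      have := heq 0 (Finset.mem_univ _) 2 (Finset.mem_univ _) ∅ (by decide) (by decide)
      unfold marg at this; exact this
    have q1 : w {1} - w ∅ = w {2} - w ∅ := by
      have := heq 1 (Finset.mem_univ _) 2 (Finset.mem_univ _) ∅ (by decide) (by decide)
      unfold marg at this; exact this
    have q2 : w {0,1} - w {1} = w (insert 2 {1}) - w {1} := by
      have := heq 0 (Finset.mem_univ _) 2 (Finset.mem_univ _) {1} (by decide) (by decide)
      unfold marg at this
      rwa [show insert (0:Fin 3) ({1} : Finset (Fin 3)) = {0,1} from by decide] at this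
    have hE' : w Finset.univ > w {0} + w {1} + w {2} := by
      have h := hE; unfold EssentialGame at h
      rwa [Fin.sum_univ_three] at h
    rw [h0] at m0 q0 q1
    linarith
end
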